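/- Let f be a PC² function on an open set Ω ⊆ ℝⁿ, with C² pieces f₁, …, f_I. Then f is twice directionally differentiable on Ω: for every x ∈ Ω and every d ∈ ℝⁿ, the directional derivatives f'(x;d) and f⁽²⁾(x;d) exist, and f⁽²⁾(x;d) = dᵀ∇²f_i(x)d for every index i in the directionally active set A'(x;d). -/

import Mathlib

open Filter Topology Set


lemma freq_pigeon {α : Type*} {ι : Type*} [Finite ι] {l : Filter α} {p : ι → α → Prop}
    (h : ∃ᶠ x in l, ∃ i, p i x) : ∃ i, ∃ᶠ x in l, p i x := by
  by_contra hc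
  push_neg at hc
  rcases (h.and_eventually (Filter.eventually_all.mpr hc)).exists with ⟨x, ⟨i, hi⟩, hni⟩
  exact hni i hi

lemma limit_value {ι : Type*} [Finite ι] {ε : ℝ}
    {φ : ℝ → ℝ} {ψ : ι → ℝ → ℝ} {b : ι → ℝ}
    (hψ : ∀ i, Tendsto (ψ i) (𝓝[>] (0:ℝ)) (𝓝 (b i)))
    (hcov : ∀ τ ∈ Set.Ioo (0:ℝ) ε, ∃ i, φ τ = ψ i τ)
    {v : ℝ} (hv : ∃ᶠ τ in 𝓝[>] (0:ℝ), τ < ε ∧ φ τ = v) : ∃ i, v = b i := by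
  have h1 : ∃ᶠ τ in 𝓝[>] (0:ℝ), ∃ i, ψ i τ = v := by
    refine (hv.and_eventually (eventually_mem_nhdsWithin)).mono ?_
    rintro τ ⟨⟨hτε, hτv⟩, hτpos⟩
    obtain ⟨i, hi⟩ := hcov τ ⟨hτpos, hτε⟩
    exact ⟨i, by rw [← hi, hτv]⟩
  obtain ⟨i, hfreq⟩ := freq_pigeon h1
  haveI := frequently_iff_neBot.mp hfreq
  have t1 : Tendsto (ψ i) (𝓝[>] (0:ℝ) ⊓ 𝓟 {τ | ψ i τ = v}) (𝓝 (b i)) :=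
    (hψ i).mono_left inf_le_left
  have heq : ∀ᶠ τ in 𝓝[>] (0:ℝ) ⊓ 𝓟 {τ | ψ i τ = v}, ψ i τ = v := by
    filter_upwards [mem_inf_of_right (mem_principal_self _)] with τ hτ using hτ
  have t2 : Tendsto (ψ i) (𝓝[>] (0:ℝ) ⊓ 𝓟 {τ | ψ i τ = v}) (𝓝 v) :=
    tendsto_const_nhds.congr' (heq.mono fun τ h => h.symm)
  exact ⟨i, tendsto_nhds_unique t2 t1⟩

lemma keyAux {ι : Type*} [Finite ι] {ε : ℝ} (hε : 0 < ε)
    {φ : ℝ → ℝ} (hφ : ContinuousOn φ (Set.Ioo 0 ε))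
    {ψ : ι → ℝ → ℝ} {b : ι → ℝ}
    (hψ : ∀ i, Tendsto (ψ i) (𝓝[>] (0:ℝ)) (𝓝 (b i)))
    (hcov : ∀ τ ∈ Set.Ioo (0:ℝ) ε, ∃ i, φ τ = ψ i τ)
    (hact : ∀ i, ∃ᶠ τ in 𝓝[>] (0:ℝ), τ < ε ∧ φ τ = ψ i τ)
    (i : ι) {v : ℝ} (hv : b i < v) : ∀ᶠ τ in 𝓝[>] (0:ℝ), φ τ < v := by
  by_contra hcon
  have hfr : ∃ᶠ τ in 𝓝[>] (0:ℝ), v ≤ φ τ := by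
    simpa [Filter.not_eventually, not_lt] using hcon
  obtain ⟨v', hv'mem, hv'ne⟩ : ∃ v' ∈ Set.Ioo (b i) v, ∀ j, v' ≠ b j := by
    have hinf : (Set.Ioo (b i) v).Infinite := Set.infinite_coe_iff.mp (Set.Ioo.infinite hv)
    obtain ⟨v', hv1⟩ := (hinf.diff (Set.finite_range b)).nonempty
    exact ⟨v', hv1.1, fun j hj => hv1.2 ⟨j, hj.symm⟩⟩
  have hev : ∀ᶠ τ in 𝓝[>] (0:ℝ), ψ i τ < v' := (hψ i).eventually (Iio_mem_nhds hv'mem.1)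
  have hfv : ∃ᶠ τ in 𝓝[>] (0:ℝ), τ < ε ∧ φ τ = v' := by
    rw [Filter.frequently_iff]
    intro U hU
    obtain ⟨u, hu, hsub⟩ := mem_nhdsGT_iff_exists_Ioo_subset.mp hU
    have hIoo1 : ∀ᶠ τ in 𝓝[>] (0:ℝ), τ ∈ Set.Ioo (0:ℝ) u :=
      eventually_mem_set.mpr (Ioo_mem_nhdsGT_of_mem ⟨le_refl _, hu⟩)
    have hIoo : ∀ᶠ τ in 𝓝[>] (0:ℝ), τ ∈ Set.Ioo (0:ℝ) u ∧ τ < ε :=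
      hIoo1.and ((tendsto_id.mono_right nhdsWithin_le_nhds).eventually_lt_const hε)
    obtain ⟨a, ⟨-, haφ⟩, haψ, haIoo, haε⟩ := ((hact i).and_eventually (hev.and hIoo)).exists
    obtain ⟨c, hcv, hcIoo, hcε⟩ := (hfr.and_eventually hIoo).exists
    have hsub2 : Set.uIcc a c ⊆ Set.Ioo 0 (min u ε) := by
      intro t ht
      rw [Set.mem_uIcc] at ht
      rcases ht with ⟨h1, h2⟩ | ⟨h1, h2⟩
      · exact ⟨lt_of_lt_of_le haIoo.1 h1, lt_of_le_of_lt h2 (lt_min hcIoo.2 hcε)⟩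
      · exact ⟨lt_of_lt_of_le hcIoo.1 h1, lt_of_le_of_lt h2 (lt_min haIoo.2 haε)⟩
    have hsubU : Set.Ioo 0 (min u ε) ⊆ U ∩ Set.Iio ε :=
      fun t ht => ⟨hsub ⟨ht.1, lt_of_lt_of_le ht.2 (min_le_left _ _)⟩,
        lt_of_lt_of_le ht.2 (min_le_right _ _)⟩
    have hm : v' ∈ Set.uIcc (φ a) (φ c) := by
      rw [Set.mem_uIcc]
      exact Or.inl ⟨le_of_lt (haφ ▸ haψ), le_of_lt (lt_of_lt_of_le hv'mem.2 hcv)⟩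
    obtain ⟨ρ, hρmem, hρ⟩ := intermediate_value_uIcc
      (hφ.mono (hsub2.trans (fun t ht => ⟨ht.1, lt_of_lt_of_le ht.2 (min_le_right _ _)⟩))) hm
    have hρU := hsubU (hsub2 hρmem)
    exact ⟨ρ, hρU.1, hρU.2, hρ⟩
  obtain ⟨j, hj⟩ := limit_value hψ hcov hfv
  exact hv'ne j hj

lemma key {ι : Type*} [Finite ι] {ε : ℝ} (hε : 0 < ε)
    {φ : ℝ → ℝ} (hφ : ContinuousOn φ (Set.Ioo 0 ε))
    {ψ : ι → ℝ → ℝ} {b : ι → ℝ}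
    (hψ : ∀ i, Tendsto (ψ i) (𝓝[>] (0:ℝ)) (𝓝 (b i)))
    (hcov : ∀ τ ∈ Set.Ioo (0:ℝ) ε, ∃ i, φ τ = ψ i τ)
    (hact : ∀ i, ∃ᶠ τ in 𝓝[>] (0:ℝ), τ < ε ∧ φ τ = ψ i τ)
    (i : ι) : Tendsto φ (𝓝[>] (0:ℝ)) (𝓝 (b i)) := by
  rw [tendsto_order]
  constructor
  · intro v hv
    have := keyAux (φ := fun τ => -φ τ) (ψ := fun j τ => -ψ j τ) (b := fun j => -b j)
      hε hφ.neg (fun j => (hψ j).neg)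
      (fun τ hτ => (hcov τ hτ).imp fun j hj => by simp [hj])
      (fun j => (hact j).mono fun τ hτ => ⟨hτ.1, by simp [hτ.2]⟩)
      i (neg_lt_neg hv)
    exact this.mono fun τ hτ => by simpa using neg_lt_neg hτ
  · intro v hv
    exact keyAux hε hφ hψ hcov hact i hv

lemma taylor2 {G G' : ℝ → ℝ} {ε : ℝ} (hε : 0 < ε)
    (hG : ∀ t ∈ Set.Ioo (-ε) ε, HasDerivAt G (G' t) t)
    {C : ℝ} (hG' : HasDerivAt G' C 0) :
    Tendsto (fun τ => 2 * (G τ - G 0 - τ * G' 0) / τ ^ 2) (𝓝[>] (0:ℝ)) (𝓝 C) := by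
  set h : ℝ → ℝ := fun τ => G τ - G 0 - τ * G' 0 - C * τ ^ 2 / 2 with hh
  set h' : ℝ → ℝ := fun τ => G' τ - G' 0 - C * τ with hh'
  have hder : ∀ t ∈ Set.Ioo (-ε) ε, HasDerivAt h (h' t) t := by
    intro t ht
    have h1 := (((hG t ht).sub_const (G 0)).sub ((hasDerivAt_id t).mul_const (G' 0))).sub
      ((((hasDerivAt_id t).pow 2).const_mul C).div_const 2)
    convert h1 using 1
    · rfl
    · rfl
    · rfl
    · simp [hh']
      ring
  have hh'0 : h' 0 = 0 := by simp [hh']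
  have hd0 : HasDerivAt h' 0 0 := by
    have := (hG'.sub_const (G' 0)).sub ((hasDerivAt_id (0:ℝ)).const_mul C)
    simp at this
    exact this
  have hslope : Tendsto (fun ξ => h' ξ / ξ) (𝓝[>] (0:ℝ)) (𝓝 0) := by
    have h2 := hasDerivAt_iff_tendsto_slope.mp hd0
    have h3 : Tendsto (slope h' 0) (𝓝[>] (0:ℝ)) (𝓝 0) :=
      h2.mono_left (nhdsWithin_mono _ (fun t ht => ne_of_gt ht))
    refine h3.congr' ?_
    filter_upwards [eventually_mem_nhdsWithin] with ξ (hξ : (0:ℝ) < ξ)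
    simp [slope_def_field, hh'0]
  rw [Metric.tendsto_nhdsWithin_nhds] at hslope ⊢
  intro η hη
  obtain ⟨δ₁, hδ₁pos, hδ₁⟩ := hslope (η/4) (by positivity)
  refine ⟨min δ₁ ε, by positivity, ?_⟩
  intro τ hτ hdist
  have hτpos : (0:ℝ) < τ := hτ
  rw [Real.dist_eq, sub_zero, abs_of_pos hτpos] at hdist
  have hτδ : τ < δ₁ := lt_of_lt_of_le hdist (min_le_left _ _)
  have hτε : τ < ε := lt_of_lt_of_le hdist (min_le_right _ _)
  have hcont : ContinuousOn h (Set.Icc 0 τ) := fun t ht =>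
    ((hder t ⟨lt_of_lt_of_le (neg_lt_zero.mpr hε) ht.1, lt_of_le_of_lt ht.2 hτε⟩).continuousAt).continuousWithinAt
  obtain ⟨ξ, hξmem, hξeq⟩ := exists_hasDerivAt_eq_slope h h' hτpos hcont
    (fun t ht => hder t ⟨lt_trans (neg_lt_zero.mpr hε) ht.1, lt_trans ht.2 hτε⟩)
  have h0 : h 0 = 0 := by simp [hh]
  have hξpos : 0 < ξ := hξmem.1
  have hξτ : ξ < τ := hξmem.2
  have hbd : |h' ξ| / ξ < η / 4 := by
    have := hδ₁ (hξpos : ξ ∈ Set.Ioi (0:ℝ)) (by rw [Real.dist_eq, sub_zero, abs_of_pos hξpos]; exact lt_trans hξτ hτδ)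
    simpa [Real.dist_eq, abs_div, abs_of_pos hξpos] using this
  have hbd2 : |h' ξ| < η / 4 * ξ := (div_lt_iff₀ hξpos).mp hbd
  have hhτ : h τ = h' ξ * τ := by
    rw [hξeq, h0, sub_zero, sub_zero]
    field_simp
  rw [Real.dist_eq]
  have key : 2 * (G τ - G 0 - τ * G' 0) / τ ^ 2 - C = 2 * h τ / τ ^ 2 := by
    simp only [hh]
    field_simp
  rw [key, hhτ]
  have : |2 * (h' ξ * τ) / τ ^ 2| = 2 * |h' ξ| / τ := by
    rw [abs_div, abs_mul, abs_mul, abs_of_pos hτpos, abs_of_pos (pow_pos hτpos 2)]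
    rw [pow_two]
    field_simp
    ring
  rw [this]
  have h1 : |h' ξ| < η / 4 * τ :=
    hbd2.trans_le (mul_le_mul_of_nonneg_left hξτ.le (by positivity))
  calc 2 * |h' ξ| / τ < 2 * (η / 4 * τ) / τ := by
        exact (div_lt_div_iff_of_pos_right hτpos).mpr (by linarith)
  _ = η / 2 := by field_simp; ring
  _ < η := by linarith

lemma piece {n : ℕ} {Ω : Set (Fin n → ℝ)} (hΩ : IsOpen Ω) {F : (Fin n → ℝ) → ℝ}
    (hF : ContDiffOn ℝ 2 F Ω) {x : Fin n → ℝ} (hx : x ∈ Ω) (d : Fin n → ℝ) :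
    ∃ B : ℝ, HasDerivAt (fun τ : ℝ => F (x + τ • d)) B 0 ∧
      Tendsto (fun τ : ℝ => 2 * (F (x + τ • d) - F x - τ * B) / τ ^ 2) (𝓝[>] (0:ℝ))
        (𝓝 (iteratedFDerivWithin ℝ 2 F Ω x ![d, d])) := by
  have hγ : ∀ τ : ℝ, HasDerivAt (fun τ : ℝ => x + τ • d) d τ := by
    intro τ
    simpa using ((hasDerivAt_id τ).smul_const d).const_add x
  have hγc : Continuous (fun τ : ℝ => x + τ • d) := by
    continuity
  -- find ε
  have h0 : (fun τ : ℝ => x + τ • d) ⁻¹' Ω ∈ 𝓝 (0:ℝ) := by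
    apply hγc.continuousAt.preimage_mem_nhds
    simpa using hΩ.mem_nhds hx
  obtain ⟨ε, hεpos, hε⟩ := Metric.mem_nhds_iff.mp h0
  have hmem : ∀ τ ∈ Set.Ioo (-ε) ε, x + τ • d ∈ Ω := by
    intro τ hτ
    exact hε (by rw [Metric.mem_ball, Real.dist_eq, sub_zero]; exact abs_lt.mpr ⟨hτ.1, hτ.2⟩)
  have hFat : ∀ y ∈ Ω, ContDiffAt ℝ 2 F y := fun y hy => hF.contDiffAt (hΩ.mem_nhds hy)
  set G' : ℝ → ℝ := fun τ => fderiv ℝ F (x + τ • d) d with hG'def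
  have hG : ∀ t ∈ Set.Ioo (-ε) ε, HasDerivAt (fun τ : ℝ => F (x + τ • d)) (G' t) t := by
    intro t ht
    have hd : HasFDerivAt F (fderiv ℝ F (x + t • d)) (x + t • d) :=
      ((hFat _ (hmem t ht)).differentiableAt (by norm_num)).hasFDerivAt
    exact hd.comp_hasDerivAt t (hγ t)
  -- second derivative
  have hf1 : ContDiffAt ℝ 1 (fderiv ℝ F) x := (hFat x hx).fderiv_right (by norm_num)
  have hdf : HasFDerivAt (fderiv ℝ F) (fderiv ℝ (fderiv ℝ F) x) x :=
    (hf1.differentiableAt (by norm_num)).hasFDerivAt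
  have hcomp : HasDerivAt (fun τ : ℝ => fderiv ℝ F (x + τ • d)) (fderiv ℝ (fderiv ℝ F) x d) 0 := by
    have hdf' : HasFDerivAt (fderiv ℝ F) (fderiv ℝ (fderiv ℝ F) x) (x + (0:ℝ) • d) := by
      simpa using hdf
    exact hdf'.comp_hasDerivAt (0:ℝ) (hγ 0)
  have hG'd : HasDerivAt G' (fderiv ℝ (fderiv ℝ F) x d d) 0 := by
    have := hcomp.clm_apply (hasDerivAt_const (0:ℝ) d)
    simpa using this
  have heq : iteratedFDerivWithin ℝ 2 F Ω x ![d, d] = fderiv ℝ (fderiv ℝ F) x d d := by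
    rw [iteratedFDerivWithin_two_apply F hΩ.uniqueDiffOn hx]
    have h1 : fderivWithin ℝ (fderivWithin ℝ F Ω) Ω x = fderiv ℝ (fderivWithin ℝ F Ω) x :=
      fderivWithin_of_isOpen hΩ hx
    have h2 : fderiv ℝ (fderivWithin ℝ F Ω) x = fderiv ℝ (fderiv ℝ F) x := by
      apply Filter.EventuallyEq.fderiv_eq
      filter_upwards [hΩ.mem_nhds hx] with y hy
      exact fderivWithin_of_isOpen hΩ hy
    simp [h1, h2, Matrix.cons_val_zero, Matrix.cons_val_one]
  refine ⟨G' 0, ?_, ?_⟩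
  · exact hG 0 ⟨neg_lt_zero.mpr hεpos, hεpos⟩
  · rw [heq]
    have := taylor2 hεpos hG hG'd
    simpa using this


noncomputable section

/-- One-sided directional derivative: `f'(x;v) = d`. -/
def HasDirDeriv {n : ℕ} (f : (Fin n → ℝ) → ℝ) (x v : Fin n → ℝ) (d : ℝ) : Prop :=
  Tendsto (fun τ : ℝ => (f (x + τ • v) - f x) / τ) (𝓝[>] 0) (𝓝 d)

/-- Second-order directional derivative: `f'(x;v) = d₁` and `f⁽²⁾(x;v) = d₂`. -/
def HasDirDeriv2 {n : ℕ} (f : (Fin n → ℝ) → ℝ) (x v : Fin n → ℝ) (d₁ d₂ : ℝ) : Prop :=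
  HasDirDeriv f x v d₁ ∧
  Tendsto (fun τ : ℝ => 2 * (f (x + τ • v) - f x - τ * d₁) / τ ^ 2) (𝓝[>] 0) (𝓝 d₂)

/-- A PC² function on an open set `Ω` is twice directionally
differentiable on `Ω`, and `f⁽²⁾(x;d) = dᵀ∇²fᵢ(x)d` for every index `i` in the
directionally active set `A'(x;d)`. -/
theorem stmt7 {n I : ℕ} (Ω : Set (Fin n → ℝ)) (hΩ : IsOpen Ω)
    (f : (Fin n → ℝ) → ℝ) (hf : ContinuousOn f Ω)
    (fs : Fin I → (Fin n → ℝ) → ℝ) (hfs : ∀ i, ContDiffOn ℝ 2 (fs i) Ω)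
    (hsel : ∀ x ∈ Ω, ∃ i, f x = fs i x) :
    ∀ x ∈ Ω, ∀ d : Fin n → ℝ, ∃ d₁ d₂ : ℝ, HasDirDeriv2 f x d d₁ d₂ ∧
      ∀ i : Fin I,
        (∃ τ : ℕ → ℝ, (∀ k, 0 < τ k) ∧ Tendsto τ atTop (𝓝 (0:ℝ)) ∧
          ∀ k, f (x + τ k • d) = fs i (x + τ k • d)) →
        d₂ = iteratedFDerivWithin ℝ 2 (fs i) Ω x ![d, d] := by
  intro x hx d
  classical
  choose B hB1 hB2 using fun i => piece hΩ (hfs i) hx d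
  set C : Fin I → ℝ := fun i => iteratedFDerivWithin ℝ 2 (fs i) Ω x ![d, d] with hC
  have hγc : Continuous (fun τ : ℝ => x + τ • d) := by continuity
  have hγ0 : Tendsto (fun τ : ℝ => x + τ • d) (𝓝 (0:ℝ)) (𝓝 x) := by
    simpa using hγc.tendsto 0
  obtain ⟨ε₁, hε₁pos, hε₁⟩ := Metric.mem_nhds_iff.mp
    (hγc.continuousAt.preimage_mem_nhds (by simpa using hΩ.mem_nhds hx) :
      (fun τ : ℝ => x + τ • d) ⁻¹' Ω ∈ 𝓝 (0:ℝ))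
  have hmem : ∀ τ : ℝ, 0 < τ → τ < ε₁ → x + τ • d ∈ Ω := fun τ h1 h2 =>
    hε₁ (by rw [Metric.mem_ball, Real.dist_eq, sub_zero]; exact abs_lt.mpr ⟨lt_trans (neg_lt_zero.mpr hε₁pos) h1, h2⟩)
  set act : Fin I → Prop := fun i => ∃ᶠ τ in 𝓝[>] (0:ℝ), f (x + τ • d) = fs i (x + τ • d)
    with hactdef
  have hshr : ∀ᶠ τ in 𝓝[>] (0:ℝ),
      τ < ε₁ ∧ ∀ i, ¬ act i → f (x + τ • d) ≠ fs i (x + τ • d) := by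
    refine ((tendsto_id.mono_right nhdsWithin_le_nhds).eventually_lt_const hε₁pos).and ?_
    rw [eventually_all]
    intro i
    by_cases h : act i
    · filter_upwards with τ; tauto
    · rw [hactdef] at h
      simp only [Filter.not_frequently] at h
      filter_upwards [h] with τ hτ _ using hτ
  obtain ⟨ε, hεIoi, hεsub⟩ := mem_nhdsGT_iff_exists_Ioo_subset.mp hshr
  have hεpos : (0:ℝ) < ε := hεIoi
  -- nonempty active set
  have hne : ∃ i, act i := by
    by_contra hno
    push_neg at hno
    obtain ⟨hτε₁, hall⟩ := hεsub ⟨half_pos hεpos, half_lt_self hεpos⟩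
    obtain ⟨j, hj⟩ := hsel _ (hmem (ε/2) (half_pos hεpos) hτε₁)
    exact hall j (hno j) hj
  haveI : Nonempty {i // act i} := ⟨⟨hne.choose, hne.choose_spec⟩⟩
  -- active pieces agree with f at x
  have hact_eq : ∀ i, act i → fs i x = f x := by
    intro i hi
    haveI := frequently_iff_neBot.mp hi
    set l := 𝓝[>] (0:ℝ) ⊓ 𝓟 {τ | f (x + τ • d) = fs i (x + τ • d)} with hl
    have hγl : Tendsto (fun τ : ℝ => x + τ • d) l (𝓝 x) :=
      hγ0.mono_left (le_trans inf_le_left nhdsWithin_le_nhds)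
    have t1 : Tendsto (fun τ : ℝ => f (x + τ • d)) l (𝓝 (f x)) :=
      ((hf.continuousAt (hΩ.mem_nhds hx)).tendsto).comp hγl
    have t2 : Tendsto (fun τ : ℝ => fs i (x + τ • d)) l (𝓝 (fs i x)) :=
      (((hfs i).continuousOn.continuousAt (hΩ.mem_nhds hx)).tendsto).comp hγl
    have heq : ∀ᶠ τ in l, f (x + τ • d) = fs i (x + τ • d) := by
      filter_upwards [mem_inf_of_right (mem_principal_self _)] with τ hτ using hτ
    exact tendsto_nhds_unique t2 (t1.congr' heq)
  -- first-order
  have hψ1 : ∀ i : {i // act i},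
      Tendsto (fun τ : ℝ => (fs i.1 (x + τ • d) - f x) / τ) (𝓝[>] (0:ℝ)) (𝓝 (B i.1)) := by
    rintro ⟨i, hi⟩
    have h1 := hasDerivAt_iff_tendsto_slope.mp (hB1 i)
    have h2 := h1.mono_left (nhdsWithin_mono _ (fun t (ht : t ∈ Set.Ioi (0:ℝ)) => ne_of_gt ht))
    refine h2.congr' ?_
    filter_upwards [eventually_mem_nhdsWithin] with τ (hτ : (0:ℝ) < τ)
    simp [slope_def_field, hact_eq i hi]
  have hgc : ∀ τ ∈ Set.Ioo (0:ℝ) ε, ContinuousAt (fun τ : ℝ => f (x + τ • d)) τ := by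
    intro τ hτ
    exact ContinuousAt.comp (hf.continuousAt (hΩ.mem_nhds (hmem τ hτ.1 (hεsub hτ).1)))
      hγc.continuousAt
  have hφcont : ContinuousOn (fun τ : ℝ => (f (x + τ • d) - f x) / τ) (Set.Ioo 0 ε) := by
    intro τ hτ
    exact (((hgc τ hτ).sub continuousAt_const).div continuousAt_id
      (ne_of_gt hτ.1)).continuousWithinAt
  have hcov0 : ∀ τ ∈ Set.Ioo (0:ℝ) ε, ∃ i : {i // act i},
      f (x + τ • d) = fs i.1 (x + τ • d) := by
    intro τ hτ
    obtain ⟨hτε₁, hall⟩ := hεsub hτ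
    obtain ⟨j, hj⟩ := hsel _ (hmem τ hτ.1 hτε₁)
    by_cases hj' : act j
    · exact ⟨⟨j, hj'⟩, hj⟩
    · exact absurd hj (hall j hj')
  have hcov1 : ∀ τ ∈ Set.Ioo (0:ℝ) ε, ∃ i : {i // act i},
      (f (x + τ • d) - f x) / τ = (fs i.1 (x + τ • d) - f x) / τ := by
    intro τ hτ
    obtain ⟨i, hi⟩ := hcov0 τ hτ
    exact ⟨i, by rw [hi]⟩
  have hevε : ∀ᶠ τ in 𝓝[>] (0:ℝ), τ < ε :=
    (tendsto_id.mono_right nhdsWithin_le_nhds).eventually_lt_const hεpos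
  have hact1 : ∀ i : {i // act i}, ∃ᶠ τ in 𝓝[>] (0:ℝ),
      τ < ε ∧ (f (x + τ • d) - f x) / τ = (fs i.1 (x + τ • d) - f x) / τ := by
    rintro ⟨i, hi⟩
    refine (hi.and_eventually hevε).mono ?_
    rintro τ ⟨h1, h2⟩
    exact ⟨h2, by rw [h1]⟩
  have h1 : ∀ i : {i // act i},
      Tendsto (fun τ : ℝ => (f (x + τ • d) - f x) / τ) (𝓝[>] (0:ℝ)) (𝓝 (B i.1)) :=
    fun i => key hεpos hφcont hψ1 hcov1 hact1 i
  set i₀ : {i // act i} := Classical.arbitrary _ with hi₀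
  set d₁ : ℝ := B i₀.1 with hd₁
  have hBall : ∀ i : {i // act i}, B i.1 = d₁ := fun i => tendsto_nhds_unique (h1 i) (h1 i₀)
  -- second order
  have hψ2 : ∀ i : {i // act i},
      Tendsto (fun τ : ℝ => 2 * (fs i.1 (x + τ • d) - f x - τ * d₁) / τ ^ 2)
        (𝓝[>] (0:ℝ)) (𝓝 (C i.1)) := by
    rintro ⟨i, hi⟩
    have := hB2 i
    rw [hact_eq i hi] at this
    rw [hBall ⟨i, hi⟩] at this
    exact this
  have hφ₂cont : ContinuousOn (fun τ : ℝ => 2 * (f (x + τ • d) - f x - τ * d₁) / τ ^ 2)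
      (Set.Ioo 0 ε) := by
    intro τ hτ
    exact ((continuousAt_const.mul (((hgc τ hτ).sub continuousAt_const).sub
      (continuousAt_id.mul continuousAt_const))).div (continuousAt_id.pow 2)
      (pow_ne_zero 2 (ne_of_gt hτ.1))).continuousWithinAt
  have hcov2 : ∀ τ ∈ Set.Ioo (0:ℝ) ε, ∃ i : {i // act i},
      2 * (f (x + τ • d) - f x - τ * d₁) / τ ^ 2
        = 2 * (fs i.1 (x + τ • d) - f x - τ * d₁) / τ ^ 2 := by
    intro τ hτ
    obtain ⟨i, hi⟩ := hcov0 τ hτ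
    exact ⟨i, by rw [hi]⟩
  have hact2 : ∀ i : {i // act i}, ∃ᶠ τ in 𝓝[>] (0:ℝ),
      τ < ε ∧ 2 * (f (x + τ • d) - f x - τ * d₁) / τ ^ 2
        = 2 * (fs i.1 (x + τ • d) - f x - τ * d₁) / τ ^ 2 := by
    rintro ⟨i, hi⟩
    refine (hi.and_eventually hevε).mono ?_
    rintro τ ⟨h1, h2⟩
    exact ⟨h2, by rw [h1]⟩
  have h2 : ∀ i : {i // act i},
      Tendsto (fun τ : ℝ => 2 * (f (x + τ • d) - f x - τ * d₁) / τ ^ 2)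
        (𝓝[>] (0:ℝ)) (𝓝 (C i.1)) :=
    fun i => key hεpos hφ₂cont hψ2 hcov2 hact2 i
  refine ⟨d₁, C i₀.1, ⟨h1 i₀, h2 i₀⟩, ?_⟩
  rintro i ⟨τ, hτpos, hτlim, hτact⟩
  have hiact : act i :=
    (tendsto_nhdsWithin_of_tendsto_nhds_of_eventually_within τ hτlim
      (Eventually.of_forall hτpos)).frequently (Frequently.of_forall hτact)
  exact tendsto_nhds_unique (h2 i₀) (h2 ⟨i, hiact⟩)
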